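/- There is no strict linear order < on the underlying set of M₀ such that the expanded structure (M₀, <) is ultrahomogeneous and the age of (M₀, <) has the Ramsey property. -/

import Mathlib

open FirstOrder Language Structure CategoryTheory

/-- The language `L₀` with a `2n`-ary relation symbol `E_n` for each `n ≥ 1`. -/
def L₀ : FirstOrder.Language where
  Functions := fun _ => Empty
  Relations := fun k => {n : ℕ // 0 < n ∧ k = n + n}

/-- The relation symbol `E_n`. -/
def Esymb (n : ℕ) (hn : 0 < n) : L₀.Relations (n + n) := ⟨n, hn, rfl⟩

/-- `E_n(x̄, ȳ)` in an `L₀`-structure. -/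
def ERel (M : Type*) [L₀.Structure M] (n : ℕ) (hn : 0 < n) (x y : Fin n → M) : Prop :=
  Structure.RelMap (Esymb n hn) (Fin.append x y)

/-- The defining conditions for membership in `K₀`: each `E_n` holds only on pairs of
injective `n`-tuples, is invariant under permuting the entries of each tuple separately,
and induces an equivalence relation on `n`-element subsets. -/
def IsK0Struct (C : Type*) [L₀.Structure C] : Prop :=
  ∀ (n : ℕ) (hn : 0 < n),
    (∀ x y : Fin n → C, ERel C n hn x y → Function.Injective x ∧ Function.Injective y) ∧
    (∀ (x y : Fin n → C) (σ τ : Equiv.Perm (Fin n)),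
        ERel C n hn x y → ERel C n hn (x ∘ σ) (y ∘ τ)) ∧
    (∀ x : Fin n → C, Function.Injective x → ERel C n hn x x) ∧
    (∀ x y : Fin n → C, ERel C n hn x y → ERel C n hn y x) ∧
    (∀ x y z : Fin n → C, ERel C n hn x y → ERel C n hn y z → ERel C n hn x z)

/-- The class `K₀` of finite `L₀`-structures as above. -/
def K₀ : Set (Bundled L₀.Structure) := {C | Finite C ∧ IsK0Struct C}

/-- A language with a single binary relation symbol (for a linear order). -/
def Lord : FirstOrder.Language where
  Functions := fun _ => Empty
  Relations := fun k => PLift (k = 2)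

/-- Interpret the binary relation symbol of `Lord` by a given relation `r`. -/
def ordStructure (M : Type*) (r : M → M → Prop) : Lord.Structure M where
  funMap := fun f => f.elim
  RelMap := fun {k} R v => r (v (Fin.cast R.down.symm 0)) (v (Fin.cast R.down.symm 1))

/-- The language of `L₀` together with one extra binary relation symbol `<`. -/
abbrev L₀lt : FirstOrder.Language := L₀.sum Lord

/-- The expansion of an `L₀`-structure by the binary relation `r`. -/
def expStr (M : Type*) [L₀.Structure M] (r : M → M → Prop) : L₀lt.Structure M :=
  @Language.sumStructure L₀ Lord M _ (ordStructure M r)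

/-- The Ramsey property for a class `K` of finite structures: for all `A, B ∈ K` and
`k ≥ 1` there is `C ∈ K` such that every `k`-coloring of the copies of `A` in `C` is
monochromatic on the copies of `A` inside some copy `B'` of `B` in `C`. -/
def RamseyProperty {L : FirstOrder.Language} (K : Set (Bundled L.Structure)) : Prop :=
  ∀ A B : Bundled L.Structure, A ∈ K → B ∈ K → ∀ k : ℕ, 0 < k →
    ∃ C : Bundled L.Structure, C ∈ K ∧
      ∀ χ : {S : L.Substructure C // Nonempty (S ≃[L] A)} → Fin k,
        ∃ B' : L.Substructure C, Nonempty (B' ≃[L] B) ∧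
          ∀ S T : {S : L.Substructure C // Nonempty (S ≃[L] A)},
            S.1 ≤ B' → T.1 ≤ B' → χ S = χ T


section Aux

open Set Function

/-- The canonical "same set or disjoint" relation used to build concrete `K₀`-structures. -/
def canonRel {V : Type*} {n : ℕ} (x y : Fin n → V) : Prop :=
  Function.Injective x ∧ Function.Injective y ∧
    (Set.range x = Set.range y ∨ Disjoint (Set.range x) (Set.range y))

/-- The canonical `L₀`-structure on a type. -/
def canonStr (V : Type*) : L₀.Structure V where
  funMap := fun f => f.elim
  RelMap := fun {k} R v =>
    canonRel (fun i => v (Fin.cast R.2.2.symm (Fin.castAdd R.1 i)))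
             (fun i => v (Fin.cast R.2.2.symm (Fin.natAdd R.1 i)))

lemma comp_append {α β : Type*} (f : α → β) {m n : ℕ} (x : Fin m → α) (y : Fin n → α) :
    f ∘ Fin.append x y = Fin.append (f ∘ x) (f ∘ y) := by
  funext i
  refine Fin.addCases (fun j => ?_) (fun j => ?_) i <;>
    simp [Fin.append_left, Fin.append_right]

lemma canon_erel {V : Type*} {n : ℕ} (hn : 0 < n) (x y : Fin n → V) :
    @ERel V (canonStr V) n hn x y ↔ canonRel x y := by
  show canonRel _ _ ↔ canonRel x y
  simp only [Esymb, Fin.cast_refl, Fin.cast_eq_self, id_eq, Fin.append_left, Fin.append_right]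

lemma canonRel_comp {V W : Type*} {f : V → W} (hf : Function.Injective f) {n : ℕ}
    (x y : Fin n → V) : canonRel (f ∘ x) (f ∘ y) ↔ canonRel x y := by
  unfold canonRel
  rw [hf.of_comp_iff, hf.of_comp_iff, Set.range_comp, Set.range_comp,
    Set.image_eq_image hf, Set.disjoint_image_iff hf]

lemma range_ncard_inj {V : Type*} [Fintype V] {n : ℕ} {w : Fin n → V}
    (hw : Function.Injective w) : (Set.range w).ncard = n := by
  rw [← Set.image_univ, Set.ncard_image_of_injective _ hw, Set.ncard_univ,
    Nat.card_eq_fintype_card, Fintype.card_fin]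

lemma ranges_aux {V : Type*} [Fintype V] (hV : Fintype.card V ≤ 4) {n : ℕ} (h2 : 2 ≤ n)
    {x y z : Fin n → V} (hx : Function.Injective x) (hy : Function.Injective y)
    (hz : Function.Injective z) (dxy : Disjoint (Set.range x) (Set.range y))
    (dzy : Disjoint (Set.range z) (Set.range y)) {b : V} (hbx : b ∈ Set.range x)
    (hbz : b ∉ Set.range z) : False := by
  have hA : (insert b (Set.range z)).ncard = n + 1 := by
    rw [Set.ncard_insert_of_notMem hbz (Set.toFinite _), range_ncard_inj hz]
  have hbY : b ∉ Set.range y := Set.disjoint_left.mp dxy hbx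
  have hdisj : Disjoint (insert b (Set.range z)) (Set.range y) := by
    rw [Set.insert_eq]
    exact Set.disjoint_union_left.mpr ⟨Set.disjoint_singleton_left.mpr hbY, dzy⟩
  have hU : (insert b (Set.range z) ∪ Set.range y).ncard = (n + 1) + n := by
    rw [Set.ncard_union_eq hdisj (Set.toFinite _) (Set.toFinite _), hA, range_ncard_inj hy]
  have hle : (insert b (Set.range z) ∪ Set.range y).ncard ≤ Fintype.card V := by
    calc (insert b (Set.range z) ∪ Set.range y).ncard
        ≤ (Set.univ : Set V).ncard := Set.ncard_le_ncard (Set.subset_univ _) (Set.toFinite _)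
      _ = Fintype.card V := by rw [Set.ncard_univ, Nat.card_eq_fintype_card]
  omega

lemma canon_isK0 (V : Type) [Fintype V] (hV : Fintype.card V ≤ 4) :
    @IsK0Struct V (canonStr V) := by
  intro n hn
  refine ⟨?_, ?_, ?_, ?_, ?_⟩
  · intro x y h
    rw [canon_erel] at h
    exact ⟨h.1, h.2.1⟩
  · intro x y σ τ h
    rw [canon_erel] at h ⊢
    obtain ⟨hx, hy, hor⟩ := h
    refine ⟨hx.comp σ.injective, hy.comp τ.injective, ?_⟩
    rwa [σ.surjective.range_comp, τ.surjective.range_comp]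
  · intro x hx
    rw [canon_erel]
    exact ⟨hx, hx, Or.inl rfl⟩
  · intro x y h
    rw [canon_erel] at h ⊢
    exact ⟨h.2.1, h.1, h.2.2.imp Eq.symm (fun hd => hd.symm)⟩
  · intro x y z hxy hyz
    rw [canon_erel] at hxy hyz ⊢
    obtain ⟨hx, hy, hor1⟩ := hxy
    obtain ⟨-, hz, hor2⟩ := hyz
    refine ⟨hx, hz, ?_⟩
    rcases hor1 with heq1 | hd1
    · rcases hor2 with heq2 | hd2
      · exact Or.inl (heq1.trans heq2)
      · exact Or.inr (heq1 ▸ hd2)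
    · rcases hor2 with heq2 | hd2
      · exact Or.inr (heq2 ▸ hd1)
      · rcases Nat.lt_or_ge n 2 with h1 | h2
        · -- n = 1 : two singletons are equal or disjoint
          have hn1 : n = 1 := by omega
          subst hn1
          have hrx : Set.range x = {x 0} := by
            rw [Set.range_unique]; rfl
          have hrz : Set.range z = {z 0} := by
            rw [Set.range_unique]; rfl
          by_cases hxz : x 0 = z 0
          · exact Or.inl (by rw [hrx, hrz, hxz])
          · refine Or.inr ?_
            rw [hrx, hrz, Set.disjoint_singleton]
            exact hxz
        · by_cases heq3 : Set.range x = Set.range z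
          · exact Or.inl heq3
          · exfalso
            have : ¬(Set.range x ⊆ Set.range z) ∨ ¬(Set.range z ⊆ Set.range x) := by
              by_contra hcon
              push_neg at hcon
              exact heq3 (Set.Subset.antisymm hcon.1 hcon.2)
            rcases this with hsub | hsub
            · obtain ⟨b, hbx, hbz⟩ := Set.not_subset.mp hsub
              exact ranges_aux hV h2 hx hy hz hd1 hd2.symm hbx hbz
            · obtain ⟨b, hbz, hbx⟩ := Set.not_subset.mp hsub
              exact ranges_aux hV h2 hz hy hx hd2.symm hd1 hbz hbx

lemma canonRel_iff {V : Type*} {n : ℕ} (x y : Fin n → V) :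
    canonRel x y ↔ Function.Injective x ∧ Function.Injective y ∧
      ((∀ i, ∃ j, x i = y j) ∧ (∀ j, ∃ i, y j = x i) ∨ ∀ i j, x i ≠ y j) := by
  unfold canonRel
  refine and_congr_right fun _ => and_congr_right fun _ => or_congr ?_ ?_
  · rw [Set.Subset.antisymm_iff, Set.range_subset_iff, Set.range_subset_iff]
    simp [Set.mem_range, eq_comm]
  · rw [Set.disjoint_left]
    constructor
    · intro h i j hij
      exact h ⟨i, rfl⟩ ⟨j, hij.symm⟩
    · rintro h a ⟨i, rfl⟩ ⟨j, hj⟩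
      exact h i j hj.symm

/-- The canonical `L₀`-structure on `Fin m`, as an instance. -/
instance canonInst (m : ℕ) : L₀.Structure (Fin m) := canonStr (Fin m)

/-- The order structure on `Fin m`, as an instance. -/
instance ordInst (m : ℕ) : Lord.Structure (Fin m) := ordStructure _ (· < ·)

/-- The `L₀lt`-structure on `Fin m` given by the canonical `L₀`-structure and the
natural order. -/
instance obar (m : ℕ) : L₀lt.Structure (Fin m) :=
  Language.sumStructure L₀ Lord (Fin m)

/-- The triple with all `E`-classes distinct. -/
def Abar : Bundled L₀lt.Structure := ⟨Fin 3, obar 3⟩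

/-- The quadruple in which the three pairings of disjoint pairs give three `E₂`-classes. -/
def Bbar : Bundled L₀lt.Structure := ⟨Fin 4, obar 4⟩

/-- A substructure of an `L₀lt`-structure from an arbitrary subset. -/
def triSub {M : Type*} [L₀lt.Structure M] (s : Set M) : L₀lt.Substructure M := by
  refine ⟨s, ?_⟩
  rintro n (f | f) <;> exact f.elim

@[simp] lemma mem_triSub {M : Type*} [L₀lt.Structure M] (s : Set M) (x : M) :
    x ∈ triSub s ↔ x ∈ s := Iff.rfl

lemma comp_vec2 {α β : Type*} (f : α → β) (a b : α) : f ∘ ![a, b] = ![f a, f b] := by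
  funext i
  fin_cases i <;> rfl

lemma vec2_eta {α : Type*} (w : Fin 2 → α) : ![w 0, w 1] = w := by
  funext i
  fin_cases i <;> rfl

lemma inj2 {α : Type*} {a b : α} (h : a ≠ b) : Function.Injective ![a, b] := by
  intro i j hij
  fin_cases i <;> fin_cases j <;> simp_all

lemma sort3_unique {γ : Type*} {rr : γ → γ → Prop}
    (htr : ∀ a b c : γ, rr a b → rr b c → rr a c) (hirr : ∀ a, ¬rr a a)
    {a c d t1 t2 t3 : γ} (hac : rr a c) (hcd : rr c d) (had : rr a d)
    (h12 : rr t1 t2) (h23 : rr t2 t3)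
    (hmt1 : t1 = a ∨ t1 = c ∨ t1 = d)
    (hma : a = t1 ∨ a = t2 ∨ a = t3) (hmc : c = t1 ∨ c = t2 ∨ c = t3)
    (hmd : d = t1 ∨ d = t2 ∨ d = t3) :
    t1 = a ∧ t2 = c ∧ t3 = d := by
  have hasym : ∀ {u v : γ}, rr u v → ¬rr v u := fun h h' => hirr _ (htr _ _ _ h h')
  have h13 : rr t1 t3 := htr _ _ _ h12 h23
  have ht1 : t1 = a := by
    rcases hma with h | h | h
    · exact h.symm
    · exfalso; subst h
      rcases hmt1 with h' | h' | h'
      · subst h'; exact hirr _ h12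
      · subst h'; exact hasym hac h12
      · subst h'; exact hasym had h12
    · exfalso; subst h
      rcases hmt1 with h' | h' | h'
      · subst h'; exact hirr _ h13
      · subst h'; exact hasym hac h13
      · subst h'; exact hasym had h13
  subst ht1
  have ht2 : t2 = c := by
    rcases hmc with h | h | h
    · exfalso; subst h; exact hirr _ hac
    · exact h.symm
    · exfalso; subst h
      rcases hmd with h' | h' | h'
      · subst h'; exact hirr _ had
      · subst h'; exact hasym hcd h23
      · subst h'; exact hirr _ hcd
  subst ht2
  rcases hmd with h | h | h
  · exfalso; subst h; exact hirr _ had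
  · exfalso; subst h; exact hirr _ hcd
  · exact ⟨rfl, rfl, h.symm⟩

lemma fg_of_fintype (L : FirstOrder.Language) (M : Type*) [Fintype M] [L.Structure M] :
    Structure.FG L M := by
  refine ⟨Finset.univ, ?_⟩
  rw [eq_top_iff]
  intro x _
  exact Substructure.subset_closure (by simp)

lemma erel_transfer {M : Type*} [L₀.Structure M] (S : L₀.Substructure M) {n : ℕ} (hn : 0 < n)
    (x y : Fin n → S) :
    ERel S n hn x y ↔ ERel M n hn (((↑) : S → M) ∘ x) (((↑) : S → M) ∘ y) := by
  unfold ERel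
  rw [← comp_append]
  exact (S.subtype.map_rel (Esymb n hn) (Fin.append x y)).symm

lemma M0_isK0 (M₀ : Type) [L₀.Structure M₀] (hage : L₀.age M₀ = K₀) : IsK0Struct M₀ := by
  have main : ∀ s : Set M₀, s.Finite → IsK0Struct (Substructure.closure L₀ s) := by
    intro s hs
    have hmem : (⟨Substructure.closure L₀ s, inferInstance⟩ : Bundled L₀.Structure) ∈
        L₀.age M₀ :=
      ⟨(Substructure.fg_iff_structure_fg _).1 (Substructure.fg_closure hs),
        ⟨(Substructure.closure L₀ s).subtype⟩⟩
    rw [hage] at hmem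
    exact hmem.2
  intro n hn
  refine ⟨?_, ?_, ?_, ?_, ?_⟩
  · intro x y h
    set s : Set M₀ := Set.range x ∪ Set.range y with hs
    have hsf : s.Finite := (Set.finite_range x).union (Set.finite_range y)
    set S := Substructure.closure L₀ s with hS
    have hx : ∀ i, x i ∈ S := fun i => Substructure.subset_closure (Or.inl ⟨i, rfl⟩)
    have hy : ∀ i, y i ∈ S := fun i => Substructure.subset_closure (Or.inr ⟨i, rfl⟩)
    have h' : ERel S n hn (fun i => ⟨x i, hx i⟩) (fun i => ⟨y i, hy i⟩) := by
      rw [erel_transfer S hn]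
      exact h
    obtain ⟨h1, h2⟩ := ((main s hsf) n hn).1 _ _ h'
    constructor
    · intro i j hij
      have := h1 (a₁ := i) (a₂ := j) (Subtype.ext hij)
      exact this
    · intro i j hij
      exact h2 (a₁ := i) (a₂ := j) (Subtype.ext hij)
  · intro x y σ τ h
    set s : Set M₀ := Set.range x ∪ Set.range y with hs
    have hsf : s.Finite := (Set.finite_range x).union (Set.finite_range y)
    set S := Substructure.closure L₀ s with hS
    have hx : ∀ i, x i ∈ S := fun i => Substructure.subset_closure (Or.inl ⟨i, rfl⟩)
    have hy : ∀ i, y i ∈ S := fun i => Substructure.subset_closure (Or.inr ⟨i, rfl⟩)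
    have h' : ERel S n hn (fun i => ⟨x i, hx i⟩) (fun i => ⟨y i, hy i⟩) := by
      rw [erel_transfer S hn]; exact h
    have h2 := ((main s hsf) n hn).2.1 _ _ σ τ h'
    rw [erel_transfer S hn] at h2
    exact h2
  · intro x hx
    set s : Set M₀ := Set.range x with hs
    have hsf : s.Finite := Set.finite_range x
    set S := Substructure.closure L₀ s with hS
    have hxm : ∀ i, x i ∈ S := fun i => Substructure.subset_closure ⟨i, rfl⟩
    have hinj : Function.Injective (fun i => (⟨x i, hxm i⟩ : S)) := by
      intro i j hij
      exact hx (congrArg Subtype.val hij)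
    have h2 := ((main s hsf) n hn).2.2.1 _ hinj
    rw [erel_transfer S hn] at h2
    exact h2
  · intro x y h
    set s : Set M₀ := Set.range x ∪ Set.range y with hs
    have hsf : s.Finite := (Set.finite_range x).union (Set.finite_range y)
    set S := Substructure.closure L₀ s with hS
    have hx : ∀ i, x i ∈ S := fun i => Substructure.subset_closure (Or.inl ⟨i, rfl⟩)
    have hy : ∀ i, y i ∈ S := fun i => Substructure.subset_closure (Or.inr ⟨i, rfl⟩)
    have h' : ERel S n hn (fun i => ⟨x i, hx i⟩) (fun i => ⟨y i, hy i⟩) := by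
      rw [erel_transfer S hn]; exact h
    have h2 := ((main s hsf) n hn).2.2.2.1 _ _ h'
    rw [erel_transfer S hn] at h2
    exact h2
  · intro x y z hxy hyz
    set s : Set M₀ := (Set.range x ∪ Set.range y) ∪ Set.range z with hs
    have hsf : s.Finite :=
      ((Set.finite_range x).union (Set.finite_range y)).union (Set.finite_range z)
    set S := Substructure.closure L₀ s with hS
    have hx : ∀ i, x i ∈ S := fun i => Substructure.subset_closure (Or.inl (Or.inl ⟨i, rfl⟩))
    have hy : ∀ i, y i ∈ S := fun i => Substructure.subset_closure (Or.inl (Or.inr ⟨i, rfl⟩))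
    have hz : ∀ i, z i ∈ S := fun i => Substructure.subset_closure (Or.inr ⟨i, rfl⟩)
    have h1 : ERel S n hn (fun i => ⟨x i, hx i⟩) (fun i => ⟨y i, hy i⟩) := by
      rw [erel_transfer S hn]; exact hxy
    have h2 : ERel S n hn (fun i => ⟨y i, hy i⟩) (fun i => ⟨z i, hz i⟩) := by
      rw [erel_transfer S hn]; exact hyz
    have h3 := ((main s hsf) n hn).2.2.2.2 _ _ _ h1 h2
    rw [erel_transfer S hn] at h3
    exact h3

lemma ord_rel_iff {M : Type*} (rM : M → M → Prop) {k : ℕ} (R : Lord.Relations k)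
    (v : Fin k → M) :
    @Structure.RelMap Lord M (ordStructure M rM) k R v ↔
      rM (v (Fin.cast R.down.symm 0)) (v (Fin.cast R.down.symm 1)) := Iff.rfl

lemma mem_age_obar (M₀ : Type) [L₀.Structure M₀] [Countable M₀]
    (hage : L₀.age M₀ = K₀) (r : M₀ → M₀ → Prop) (hr : IsStrictTotalOrder M₀ r)
    (m : ℕ) [NeZero m] (hm : m ≤ 4) :
    (⟨Fin m, obar m⟩ : Bundled L₀lt.Structure) ∈ @Language.age L₀lt M₀ (expStr M₀ r) := by
  letI : L₀lt.Structure M₀ := expStr M₀ r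
  letI : L₀.Structure (Fin m) := canonStr (Fin m)
  letI : L₀lt.Structure (Fin m) := obar m
  haveI := hr
  -- get an `L₀`-embedding of the canonical structure
  have hK : (⟨Fin m, canonStr (Fin m)⟩ : Bundled L₀.Structure) ∈ K₀ := by
    show Finite (Fin m) ∧ @IsK0Struct (Fin m) (canonStr (Fin m))
    exact ⟨inferInstance, canon_isK0 (Fin m) (by simpa using hm)⟩
  rw [← hage] at hK
  have hK2 : Nonempty (@Language.Embedding L₀ (Fin m) M₀ (canonStr (Fin m)) _) := hK.2
  obtain ⟨e₀⟩ := hK2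
  -- sort the image
  letI : DecidableRel r := Classical.decRel r
  letI : LinearOrder M₀ := linearOrderOfSTO r
  have hlt : ∀ u v : M₀, u < v ↔ r u v := fun _ _ => Iff.rfl
  set σ := Tuple.sort (⇑e₀ : Fin m → M₀) with hσ
  set g : Fin m → M₀ := (⇑e₀ : Fin m → M₀) ∘ σ with hg
  have hginj : Function.Injective g := e₀.injective.comp σ.injective
  have hmono : StrictMono g := (Tuple.monotone_sort _).strictMono_of_injective hginj
  have hord : ∀ i j : Fin m, r (g i) (g j) ↔ i < j := by
    intro i j
    rw [← hlt]
    exact hmono.lt_iff_lt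
  show Structure.FG L₀lt (Fin m) ∧
    Nonempty (@Language.Embedding L₀lt (Fin m) M₀ (obar m) (expStr M₀ r))
  refine ⟨fg_of_fintype _ _, ⟨?_⟩⟩
  refine ⟨⟨g, hginj⟩, ?_, ?_⟩
  · rintro n (f | f) <;> exact f.elim
  · rintro n (R | R) x
    · -- the `L₀` relations
      show Structure.RelMap (L := L₀) R (g ∘ x) ↔ @Structure.RelMap L₀ (Fin m) (canonStr _) n R x
      have h1 : Structure.RelMap (L := L₀) R (⇑e₀ ∘ (⇑σ ∘ x)) ↔
          @Structure.RelMap L₀ (Fin m) (canonStr _) n R (⇑σ ∘ x) := e₀.map_rel R (⇑σ ∘ x)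
      have h2 : @Structure.RelMap L₀ (Fin m) (canonStr _) n R (⇑σ ∘ x) ↔
          @Structure.RelMap L₀ (Fin m) (canonStr _) n R x :=
        canonRel_comp σ.injective _ _
      exact h1.trans h2
    · -- the order relation
      obtain ⟨hR⟩ := R
      subst hR
      show r (g (x _)) (g (x _)) ↔ _
      rw [hord]
      exact Iff.rfl

lemma tri_iso {M : Type*} [iM : L₀lt.Structure M]
    (pEmb : @Language.Embedding L₀lt (Fin 4) M (obar 4) iM) (ι : Fin 3 → Fin 4)
    (hι : StrictMono ι) (a b c : M)
    (ha : a = pEmb (ι 0)) (hb : b = pEmb (ι 1)) (hc : c = pEmb (ι 2)) :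
    Nonempty ((triSub {a, b, c} : L₀lt.Substructure M) ≃[L₀lt] Abar) := by
  subst ha; subst hb; subst hc
  set s : Set M := {pEmb (ι 0), pEmb (ι 1), pEmb (ι 2)} with hs
  have hmem : ∀ i : Fin 3, pEmb (ι i) ∈ triSub s := by
    intro i
    rw [mem_triSub]
    fin_cases i
    · exact Set.mem_insert _ _
    · exact Set.mem_insert_of_mem _ (Set.mem_insert _ _)
    · exact Set.mem_insert_of_mem _ (Set.mem_insert_of_mem _ rfl)
  set gg : Fin 3 → (triSub s : L₀lt.Substructure M) := fun i => ⟨pEmb (ι i), hmem i⟩ with hgg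
  have hbij : Function.Bijective gg := by
    constructor
    · intro i j hij
      exact hι.injective (pEmb.injective (congrArg Subtype.val hij))
    · rintro ⟨x, hx⟩
      rw [mem_triSub] at hx
      rcases hx with h | h | h
      · exact ⟨0, Subtype.ext h.symm⟩
      · exact ⟨1, Subtype.ext h.symm⟩
      · exact ⟨2, Subtype.ext h.symm⟩
  have e3 : @Language.Equiv L₀lt (Fin 3) (triSub s : L₀lt.Substructure M) (obar 3) _ := by
    refine ⟨Equiv.ofBijective gg hbij, ?_, ?_⟩
    · rintro n (f | f) <;> exact f.elim
    · rintro n (R | R) x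
      · show Structure.RelMap (L := L₀lt) (M := (triSub s : L₀lt.Substructure M))
          (Sum.inl R) (gg ∘ x) ↔ _
        have h1 : Structure.RelMap (L := L₀lt) (M := M) (Sum.inl R) (⇑pEmb ∘ (ι ∘ x)) ↔
            @Structure.RelMap L₀lt (Fin 4) (obar 4) n (Sum.inl R) (ι ∘ x) :=
          pEmb.map_rel _ _
        have h2 : @Structure.RelMap L₀ (Fin 4) (canonStr _) n R (ι ∘ x) ↔
            @Structure.RelMap L₀ (Fin 3) (canonStr _) n R x :=
          canonRel_comp hι.injective _ _
        exact (h1.trans h2 : _)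
      · obtain ⟨hR⟩ := R
        subst hR
        show Structure.RelMap (L := L₀lt) (M := (triSub s : L₀lt.Substructure M))
          (Sum.inr ⟨rfl⟩) (gg ∘ x) ↔ _
        have h1 : Structure.RelMap (L := L₀lt) (M := M) (Sum.inr ⟨rfl⟩) (⇑pEmb ∘ (ι ∘ x)) ↔
            @Structure.RelMap L₀lt (Fin 4) (obar 4) 2 (Sum.inr ⟨rfl⟩) (ι ∘ x) :=
          pEmb.map_rel _ _
        have h2 : (ι (x 0) < ι (x 1)) ↔ (x 0 < x 1) := hι.lt_iff_lt
        exact (h1.trans h2 : _)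
  exact ⟨e3.symm⟩

end Aux

/-- there is no strict linear order `<` on `M₀` such that `(M₀, <)` is
ultrahomogeneous and the age of `(M₀, <)` has the Ramsey property. -/
theorem M0_no_Ramsey_order (M₀ : Type) [L₀.Structure M₀] [Countable M₀]
    (hUH : L₀.IsUltrahomogeneous M₀) (hage : L₀.age M₀ = K₀) :
    ¬ ∃ r : M₀ → M₀ → Prop, IsStrictTotalOrder M₀ r ∧
        @Language.IsUltrahomogeneous L₀lt M₀ (expStr M₀ r) ∧
        RamseyProperty (@Language.age L₀lt M₀ (expStr M₀ r)) := by
  classical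
  rintro ⟨r, hr, -, hRam⟩
  letI iM : L₀lt.Structure M₀ := expStr M₀ r
  haveI := hr
  have two_pos : (0 : ℕ) < 2 := by norm_num
  have memA : Abar ∈ @Language.age L₀lt M₀ (expStr M₀ r) :=
    mem_age_obar M₀ hage r hr 3 (by norm_num)
  have memB : Bbar ∈ @Language.age L₀lt M₀ (expStr M₀ r) :=
    mem_age_obar M₀ hage r hr 4 (by norm_num)
  obtain ⟨C, hCage, hCram⟩ := hRam Abar Bbar memA memB 2 (by norm_num)
  obtain ⟨e⟩ := hCage.2
  haveI : Countable C := e.injective.countable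
  obtain ⟨enc, hencinj⟩ := Countable.exists_injective_nat C
  have hK0 : IsK0Struct M₀ := M0_isK0 M₀ hage
  -- the order relation on C
  set ords : L₀lt.Relations 2 := Sum.inr ⟨rfl⟩ with hords
  set rC : C → C → Prop := fun u v => Structure.RelMap ords ![u, v] with hrCdef
  have herC : ∀ u v : C, rC u v ↔ r (e u) (e v) := by
    intro u v
    have h := e.map_rel ords ![u, v]
    rw [comp_vec2] at h
    exact h.symm
  have hrtrans : ∀ {u v w : C}, rC u v → rC v w → rC u w := by
    intro u v w h1 h2
    rw [herC] at h1 h2 ⊢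
    exact _root_.trans_of r h1 h2
  have hirr : ∀ u : C, ¬rC u u := by
    intro u h
    rw [herC] at h
    exact irrefl_of r _ h
  -- the relation `E₂` on pairs from `C`
  set E2s : L₀lt.Relations (2 + 2) := Sum.inl (Esymb 2 two_pos) with hE2s
  set EC : (Fin 2 → C) → (Fin 2 → C) → Prop := fun x y =>
    Structure.RelMap E2s (Fin.append x y) with hECdef
  have hECM : ∀ x y : Fin 2 → C, EC x y ↔ ERel M₀ 2 two_pos (⇑e ∘ x) (⇑e ∘ y) := by
    intro x y
    have h := e.map_rel E2s (Fin.append x y)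
    rw [comp_append] at h
    exact h.symm
  have hEsym : ∀ {x y}, EC x y → EC y x := by
    intro x y h
    rw [hECM] at h ⊢
    exact (hK0 2 two_pos).2.2.2.1 _ _ h
  have hEtrans : ∀ {x y z}, EC x y → EC y z → EC x z := by
    intro x y z h1 h2
    rw [hECM] at h1 h2 ⊢
    exact (hK0 2 two_pos).2.2.2.2 _ _ _ h1 h2
  have hErefl : ∀ {x : Fin 2 → C}, Function.Injective x → EC x x := by
    intro x hx
    rw [hECM]
    exact (hK0 2 two_pos).2.2.1 _ (e.injective.comp hx)
  -- the class code of a pair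
  set pairSet : (Fin 2 → C) → Set ℕ := fun x =>
    {m | ∃ y, EC x y ∧ m = Nat.pair (enc (y 0)) (enc (y 1))} with hpairSet
  set fC : (Fin 2 → C) → ℕ := fun x => sInf (pairSet x) with hfCdef
  have hfC_eq : ∀ {x y}, EC x y → fC x = fC y := by
    intro x y h
    have hset : pairSet x = pairSet y := by
      ext m
      constructor
      · rintro ⟨y', hE, rfl⟩
        exact ⟨y', hEtrans (hEsym h) hE, rfl⟩
      · rintro ⟨y', hE, rfl⟩
        exact ⟨y', hEtrans h hE, rfl⟩
    simp only [hfCdef, hset]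
  have hfC_mem : ∀ {x}, Function.Injective x → fC x ∈ pairSet x := by
    intro x hx
    exact Nat.sInf_mem ⟨Nat.pair (enc (x 0)) (enc (x 1)), x, hErefl hx, rfl⟩
  have hfC_ne : ∀ {x y}, Function.Injective x → Function.Injective y → ¬EC x y →
      fC x ≠ fC y := by
    intro x y hx hy hE heq
    obtain ⟨y₀, hE₀, hm₀⟩ := hfC_mem hx
    obtain ⟨y₁, hE₁, hm₁⟩ := hfC_mem hy
    rw [heq, hm₁] at hm₀
    obtain ⟨h0, h1⟩ := Nat.pair_eq_pair.mp hm₀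
    have hyy : y₁ = y₀ := by
      rw [← vec2_eta y₁, ← vec2_eta y₀, hencinj h0, hencinj h1]
    rw [hyy] at hE₁
    exact hE (hEtrans hE₀ (hEsym hE₁))
  -- the coloring
  let χ : {S : L₀lt.Substructure C // Nonempty (S ≃[L₀lt] Abar)} → Fin 2 := fun S =>
    if ∃ t1 t2 t3 : C, (t1 ∈ S.1 ∧ t2 ∈ S.1 ∧ t3 ∈ S.1) ∧
        (∀ s ∈ S.1, s = t1 ∨ s = t2 ∨ s = t3) ∧ rC t1 t2 ∧ rC t2 t3 ∧
        fC ![t1, t2] ≤ fC ![t1, t3]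
      then 0 else 1
  obtain ⟨B', ⟨φ⟩, hmono⟩ := hCram χ
  -- the four points of the copy of `Bbar`
  set pEmb : @Language.Embedding L₀lt (Fin 4) C (obar 4) _ :=
    B'.subtype.comp φ.symm.toEmbedding with hpEmb
  set pp : Fin 4 → C := ⇑pEmb with hpp
  have hppinj : Function.Injective pp := pEmb.injective
  have hppmem : ∀ i, pp i ∈ B' := fun i => (φ.symm i).2
  have hp_rel : ∀ {k} (R : L₀lt.Relations k) (w : Fin k → Fin 4),
      Structure.RelMap R (pp ∘ w) ↔ @Structure.RelMap L₀lt (Fin 4) (obar 4) k R w :=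
    fun R w => pEmb.map_rel R w
  have hrp : ∀ i j : Fin 4, i < j → rC (pp i) (pp j) := by
    intro i j hij
    have h := hp_rel ords ![i, j]
    rw [comp_vec2] at h
    exact h.2 hij
  have hEp : ∀ w w' : Fin 2 → Fin 4, EC (pp ∘ w) (pp ∘ w') ↔ canonRel w w' := by
    intro w w'
    have h := hp_rel E2s (Fin.append w w')
    rw [comp_append] at h
    exact h.trans (canon_erel two_pos w w')
  -- the three `E₂`-class facts
  have hE1 : EC ![pp 0, pp 2] ![pp 1, pp 3] := by
    have h := (hEp ![0, 2] ![1, 3]).2 (by rw [canonRel_iff]; decide)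
    rwa [comp_vec2, comp_vec2] at h
  have hE2 : EC ![pp 0, pp 3] ![pp 1, pp 2] := by
    have h := (hEp ![0, 3] ![1, 2]).2 (by rw [canonRel_iff]; decide)
    rwa [comp_vec2, comp_vec2] at h
  have hE3 : ¬EC ![pp 0, pp 2] ![pp 0, pp 3] := by
    intro h
    rw [← comp_vec2 pp 0 2, ← comp_vec2 pp 0 3] at h
    have h' := (hEp ![0, 2] ![0, 3]).1 h
    rw [canonRel_iff] at h'
    revert h'
    decide
  have hne : ∀ i j : Fin 4, i ≠ j → pp i ≠ pp j := fun i j hij h => hij (hppinj h)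
  have hinj02 : Function.Injective ![pp 0, pp 2] := inj2 (hne 0 2 (by decide))
  have hinj03 : Function.Injective ![pp 0, pp 3] := inj2 (hne 0 3 (by decide))
  set α := fC ![pp 0, pp 2] with hα
  set β := fC ![pp 0, pp 3] with hβ
  have hfb : fC ![pp 1, pp 3] = α := (hfC_eq hE1).symm
  have hfc : fC ![pp 1, pp 2] = β := (hfC_eq hE2).symm
  have hαβ : α ≠ β := hfC_ne hinj02 hinj03 hE3
  -- the two substructures
  have hsm1 : StrictMono (![0, 2, 3] : Fin 3 → Fin 4) := by
    have h : ∀ i j : Fin 3, i < j → (![0, 2, 3] : Fin 3 → Fin 4) i < ![0, 2, 3] j := by decide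
    exact fun i j hij => h i j hij
  have hsm2 : StrictMono (![1, 2, 3] : Fin 3 → Fin 4) := by
    have h : ∀ i j : Fin 3, i < j → (![1, 2, 3] : Fin 3 → Fin 4) i < ![1, 2, 3] j := by decide
    exact fun i j hij => h i j hij
  have hiso1 : Nonempty ((triSub {pp 0, pp 2, pp 3} : L₀lt.Substructure C) ≃[L₀lt] Abar) :=
    tri_iso pEmb ![0, 2, 3] hsm1 (pp 0) (pp 2) (pp 3) rfl rfl rfl
  have hiso2 : Nonempty ((triSub {pp 1, pp 2, pp 3} : L₀lt.Substructure C) ≃[L₀lt] Abar) :=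
    tri_iso pEmb ![1, 2, 3] hsm2 (pp 1) (pp 2) (pp 3) rfl rfl rfl
  set SS1 : {S : L₀lt.Substructure C // Nonempty (S ≃[L₀lt] Abar)} :=
    ⟨triSub {pp 0, pp 2, pp 3}, hiso1⟩ with hSS1
  set SS2 : {S : L₀lt.Substructure C // Nonempty (S ≃[L₀lt] Abar)} :=
    ⟨triSub {pp 1, pp 2, pp 3}, hiso2⟩ with hSS2
  have hle1 : SS1.1 ≤ B' := by
    intro x hx
    rcases (mem_triSub _ x).1 hx with h | h | h <;> (subst h; exact hppmem _)
  have hle2 : SS2.1 ≤ B' := by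
    intro x hx
    rcases (mem_triSub _ x).1 hx with h | h | h <;> (subst h; exact hppmem _)
  -- evaluate the coloring on the two substructures
  have heval : ∀ (a c d : C), a ≠ c → rC a c → rC c d → rC a d →
      (∀ (hiso : Nonempty ((triSub {a, c, d} : L₀lt.Substructure C) ≃[L₀lt] Abar)),
        χ ⟨triSub {a, c, d}, hiso⟩ = if fC ![a, c] ≤ fC ![a, d] then 0 else 1) := by
    intro a c d hac' hac hcd had hiso
    show (if ∃ t1 t2 t3 : C, _ then (0 : Fin 2) else 1) = _
    by_cases hcond : fC ![a, c] ≤ fC ![a, d]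
    · have hP : ∃ t1 t2 t3 : C, (t1 ∈ (triSub {a, c, d} : L₀lt.Substructure C) ∧
          t2 ∈ (triSub {a, c, d} : L₀lt.Substructure C) ∧
          t3 ∈ (triSub {a, c, d} : L₀lt.Substructure C)) ∧
          (∀ s ∈ (triSub {a, c, d} : L₀lt.Substructure C), s = t1 ∨ s = t2 ∨ s = t3) ∧
          rC t1 t2 ∧ rC t2 t3 ∧ fC ![t1, t2] ≤ fC ![t1, t3] := by
        refine ⟨a, c, d, ⟨?_, ?_, ?_⟩, ?_, hac, hcd, hcond⟩
        · exact Set.mem_insert _ _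
        · exact Set.mem_insert_of_mem _ (Set.mem_insert _ _)
        · exact Set.mem_insert_of_mem _ (Set.mem_insert_of_mem _ rfl)
        · intro s hs
          exact (mem_triSub _ s).1 hs
      rw [if_pos hP, if_pos hcond]
    · have hP : ¬ ∃ t1 t2 t3 : C, (t1 ∈ (triSub {a, c, d} : L₀lt.Substructure C) ∧
          t2 ∈ (triSub {a, c, d} : L₀lt.Substructure C) ∧
          t3 ∈ (triSub {a, c, d} : L₀lt.Substructure C)) ∧
          (∀ s ∈ (triSub {a, c, d} : L₀lt.Substructure C), s = t1 ∨ s = t2 ∨ s = t3) ∧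
          rC t1 t2 ∧ rC t2 t3 ∧ fC ![t1, t2] ≤ fC ![t1, t3] := by
        rintro ⟨t1, t2, t3, ⟨hm1, hm2, hm3⟩, hcov, h12, h23, hle⟩
        have hmt1 := (mem_triSub _ t1).1 hm1
        have hma := hcov a (Set.mem_insert _ _)
        have hmc := hcov c (Set.mem_insert_of_mem _ (Set.mem_insert _ _))
        have hmd := hcov d (Set.mem_insert_of_mem _ (Set.mem_insert_of_mem _ rfl))
        obtain ⟨e1, e2, e3⟩ := @sort3_unique C rC (fun _ _ _ h1 h2 => hrtrans h1 h2) hirr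
          a c d t1 t2 t3 hac hcd had h12 h23 hmt1 hma hmc hmd
        subst e1; subst e2; subst e3
        exact hcond hle
      rw [if_neg hP, if_neg hcond]
  have hv1 : χ SS1 = if α ≤ β then 0 else 1 :=
    heval (pp 0) (pp 2) (pp 3) (hne 0 2 (by decide)) (hrp 0 2 (by decide))
      (hrp 2 3 (by decide)) (hrp 0 3 (by decide)) hiso1
  have hv2 : χ SS2 = if β ≤ α then 0 else 1 := by
    have h := heval (pp 1) (pp 2) (pp 3) (hne 1 2 (by decide)) (hrp 1 2 (by decide))
      (hrp 2 3 (by decide)) (hrp 1 3 (by decide)) hiso2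
    rwa [hfc, hfb] at h
  have hmono12 := hmono SS1 SS2 hle1 hle2
  rw [hv1, hv2] at hmono12
  rcases lt_or_gt_of_ne hαβ with hlt | hlt
  · rw [if_pos hlt.le, if_neg (by omega)] at hmono12
    exact absurd hmono12 (by decide)
  · rw [if_neg (by omega), if_pos hlt.le] at hmono12
    exact absurd hmono12 (by decide)
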